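/- arXiv:1706.05710 — 3 statements merged into one kernel-verified Lean document; each statement's English description precedes it below -/
import Mathlib

section
/- If f is a multiplicative arithmetic function such that the coefficients Λ_f of -F'/F (where F(s) = Σ f(n)/n^s) satisfy |Λ_f(n)| ≤ Λ(n) for all n ≥ 1 (Λ being the von Mangoldt function), then |f(n)| ≤ 1 for all n ≥ 1. -/
/-- If `f` is a multiplicative arithmetic function whose "von Mangoldt coefficients"
`Λ_f` (defined by the identity `f(n) log n = (Λ_f * f)(n)`, Dirichlet convolution)
satisfy `|Λ_f(n)| ≤ Λ(n)` for all `n`, then `|f(n)| ≤ 1` for all `n ≥ 1`. -/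
theorem stmt_0 (f Λf : ArithmeticFunction ℂ) (hf : f.IsMultiplicative)
    (hΛ : ∀ n : ℕ, f n * (Real.log n : ℂ) = (Λf * f) n)
    (hC : ∀ n : ℕ, ‖Λf n‖ ≤ ArithmeticFunction.vonMangoldt n) :
    ∀ n : ℕ, 1 ≤ n → ‖f n‖ ≤ 1 := by
  intro n
  induction n using Nat.strong_induction_on with
  | _ n ih =>
  intro hn
  rcases eq_or_lt_of_le hn with h1 | h2
  · rw [← h1]
    simp [hf.map_one]
  · have hlog : 0 < Real.log n := Real.log_pos (by exact_mod_cast h2)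
    have hΛ1 : Λf 1 = 0 := by
      have := hC 1
      simp only [ArithmeticFunction.vonMangoldt_apply_one] at this
      exact norm_le_zero_iff.mp this
    have key : ‖f n‖ * Real.log n ≤ Real.log n := by
      calc ‖f n‖ * Real.log n = ‖f n * (Real.log n : ℂ)‖ := by
            rw [norm_mul, Complex.norm_real, Real.norm_eq_abs, abs_of_pos hlog]
        _ = ‖(Λf * f) n‖ := by rw [hΛ n]
        _ ≤ ∑ x ∈ n.divisorsAntidiagonal, ‖Λf x.1 * f x.2‖ := by
            rw [ArithmeticFunction.mul_apply]; exact norm_sum_le _ _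
        _ ≤ ∑ x ∈ n.divisorsAntidiagonal, ArithmeticFunction.vonMangoldt x.1 := by
            apply Finset.sum_le_sum
            intro x hx
            rw [norm_mul]
            obtain ⟨hab, hn0⟩ := Nat.mem_divisorsAntidiagonal.mp hx
            have hble : x.2 ≤ n := Nat.le_of_dvd (by omega) ⟨x.1, by rw [← hab]; ring⟩
            rcases eq_or_lt_of_le hble with he | hlt
            · have hx1 : x.1 = 1 := by
                have : x.1 * n = 1 * n := by rw [← he] at hab ⊢; simpa using hab
                exact Nat.eq_of_mul_eq_mul_right (by omega) this
              rw [hx1, hΛ1]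
              simp [ArithmeticFunction.vonMangoldt_nonneg]
            · have hb1 : 1 ≤ x.2 := by
                rcases Nat.eq_zero_or_pos x.2 with h0 | h0
                · rw [h0, mul_zero] at hab; omega
                · exact h0
              calc ‖Λf x.1‖ * ‖f x.2‖ ≤ ArithmeticFunction.vonMangoldt x.1 * 1 :=
                    mul_le_mul (hC _) (ih x.2 hlt hb1) (norm_nonneg _)
                      ArithmeticFunction.vonMangoldt_nonneg
                _ = _ := mul_one _
        _ = ∑ d ∈ n.divisors, ArithmeticFunction.vonMangoldt d := by
            rw [← Nat.sum_divisorsAntidiagonal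
              (fun a _ => ArithmeticFunction.vonMangoldt a)]
        _ = Real.log n := ArithmeticFunction.vonMangoldt_sum
    nlinarith [norm_nonneg (f n), key]
end

section
/- Let y ≥ 2 and V₀ ≥ 1. Every y-smooth integer n > V₀ admits a unique factorization n = u·v such that P⁺(u) ≤ P⁻(v), v > V₀, and v/P⁻(v) ≤ V₀, where P⁺(u) denotes the largest prime factor of u (with P⁺(1) = 1) and P⁻(v) the smallest prime factor of v (with P⁻(1) = ∞). -/
/-- The largest prime factor of `n`, with the convention `P⁺(1) = 1`. -/
def maxPrimeFac (n : ℕ) : ℕ := max (n.primeFactors.sup id) 1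

private lemma sortedPrimes_factors {l : List ℕ} (hs : l.Pairwise (· ≤ ·))
    (hp : ∀ p ∈ l, p.Prime) : l.prod.primeFactorsList = l :=
  (List.Perm.eq_of_pairwise' hs (Nat.primeFactorsList_sorted _).pairwise
    (Nat.primeFactorsList_unique rfl hp)).symm

private lemma minFac_of_factors_cons {v p : ℕ} {t : List ℕ}
    (h : v.primeFactorsList = p :: t) : v.minFac = p := by
  have hv0 : v ≠ 0 := by rintro rfl; simp at h
  have hv1 : v ≠ 1 := by rintro rfl; simp at h
  have hpmem : p ∈ v.primeFactorsList := by rw [h]; exact List.mem_cons_self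
  have hp' : p.Prime := Nat.prime_of_mem_primeFactorsList hpmem
  have h1 : v.minFac ≤ p := Nat.minFac_le_of_dvd hp'.two_le
    (Nat.dvd_of_mem_primeFactorsList hpmem)
  have h2 : p ≤ v.minFac := by
    have hm : v.minFac ∈ v.primeFactorsList :=
      (Nat.mem_primeFactorsList hv0).mpr ⟨Nat.minFac_prime hv1, Nat.minFac_dvd v⟩
    rw [h] at hm
    have hs := (Nat.primeFactorsList_sorted v).pairwise
    rw [h, List.pairwise_cons] at hs
    rcases List.mem_cons.mp hm with h' | h'
    · omega
    · exact hs.1 _ h'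
  omega

private lemma drop_prod_anti {l : List ℕ} (hp : ∀ p ∈ l, p.Prime) {a b : ℕ}
    (hab : a ≤ b) : (l.drop b).prod ≤ (l.drop a).prod := by
  have h : (l.drop a).drop (b - a) = l.drop b := by
    rw [List.drop_drop]; congr 1; omega
  have hsplit : (l.drop a) = (l.drop a).take (b - a) ++ l.drop b := by
    rw [← h, List.take_append_drop]
  rw [hsplit, List.prod_append]
  have hpos : 0 < ((l.drop a).take (b - a)).prod := by
    apply List.prod_pos
    intro x hx
    exact (hp x (List.mem_of_mem_drop (List.mem_of_mem_take hx))).pos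
  exact Nat.le_mul_of_pos_left _ hpos

/-- Every `y`-smooth integer `n > V₀` (with `y ≥ 2`, `V₀ ≥ 1`) has a unique factorization
`n = u·v` with `P⁺(u) ≤ P⁻(v)`, `v > V₀` and `v/P⁻(v) ≤ V₀`. (Since `v > V₀ ≥ 1`, `v ≥ 2`
and its least prime factor is `v.minFac`, so the convention `P⁻(1) = ∞` is not needed.) -/
theorem stmt_5 (y V₀ : ℝ) (hy : 2 ≤ y) (hV : 1 ≤ V₀) (n : ℕ)
    (hsmooth : ∀ p : ℕ, p.Prime → p ∣ n → (p : ℝ) ≤ y) (hn : V₀ < (n : ℝ)) :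
    ∃! uv : ℕ × ℕ, n = uv.1 * uv.2 ∧ maxPrimeFac uv.1 ≤ uv.2.minFac ∧
      V₀ < (uv.2 : ℝ) ∧ (uv.2 : ℝ) / (uv.2.minFac : ℝ) ≤ V₀ := by
  classical
  clear hsmooth hy
  have hn2 : 2 ≤ n := by
    have : (1 : ℝ) < (n : ℝ) := lt_of_le_of_lt hV hn
    exact_mod_cast this
  have hn0 : n ≠ 0 := by omega
  set L := n.primeFactorsList with hLdef
  have hLs : L.Pairwise (· ≤ ·) := (Nat.primeFactorsList_sorted n).pairwise
  have hLp : ∀ p ∈ L, p.Prime := fun p hp => Nat.prime_of_mem_primeFactorsList hp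
  have hLprod : L.prod = n := Nat.prod_primeFactorsList hn0
  -- generic facts about f j := (L.drop j).prod
  have hdrop_primes : ∀ j, ∀ p ∈ L.drop j, p.Prime :=
    fun j p hp => hLp p (List.mem_of_mem_drop hp)
  have hdrop_sorted : ∀ j, (L.drop j).Pairwise (· ≤ ·) :=
    fun j => hLs.sublist (List.drop_sublist j L)
  have hdrop_pos : ∀ j, 0 < (L.drop j).prod := fun j =>
    List.prod_pos (fun x hx => ((hdrop_primes j) x hx).pos)
  -- step: for j < L.length, drop j = L[j] :: drop (j+1), and minFac of its prod is L[j]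
  have hstep : ∀ j (hj : j < L.length),
      (L.drop j).prod = L.get ⟨j, hj⟩ * (L.drop (j+1)).prod := by
    intro j hj
    rw [List.drop_eq_getElem_cons hj, List.prod_cons]
    rfl
  have hminFac : ∀ j (hj : j < L.length),
      ((L.drop j).prod).minFac = L.get ⟨j, hj⟩ := by
    intro j hj
    apply minFac_of_factors_cons (t := L.drop (j+1))
    rw [sortedPrimes_factors (hdrop_sorted j) (hdrop_primes j)]
    exact List.drop_eq_getElem_cons hj

  -- choose the cut index i
  have hex : ∃ j, ((L.drop (j+1)).prod : ℝ) ≤ V₀ := by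
    refine ⟨L.length, ?_⟩
    rw [List.drop_eq_nil_of_le (by omega)]
    simpa using hV
  set i := Nat.find hex with hidef
  have hi1 : ((L.drop (i+1)).prod : ℝ) ≤ V₀ := Nat.find_spec hex
  have hi2 : V₀ < ((L.drop i).prod : ℝ) := by
    rcases Nat.eq_zero_or_pos i with h0 | h0
    · rw [h0, List.drop_zero, hLprod]; exact hn
    · obtain ⟨k, hk⟩ : ∃ k, i = k + 1 := ⟨i - 1, by omega⟩
      have hmin := Nat.find_min hex (show k < i by omega)
      push_neg at hmin
      rw [hk]
      exact hmin
  have hiL : i < L.length := by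
    by_contra h
    push_neg at h
    rw [List.drop_eq_nil_of_le h] at hi2
    simp at hi2
    linarith
  have hmul : n = (L.take i).prod * (L.drop i).prod := by
    rw [← List.prod_append, List.take_append_drop, hLprod]
  have htake_primes : ∀ p ∈ L.take i, p.Prime :=
    fun p hp => hLp p (List.mem_of_mem_take hp)
  have htake_sorted : (L.take i).Pairwise (· ≤ ·) :=
    hLs.sublist (List.take_sublist i L)
  have hu0 : 0 < (L.take i).prod :=
    List.prod_pos (fun x hx => (htake_primes x hx).pos)
  have hgetmem : L.get ⟨i, hiL⟩ ∈ L.drop i := by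
    rw [List.drop_eq_getElem_cons hiL]
    exact List.mem_cons_self
  have hcross : ∀ a ∈ L.take i, ∀ b ∈ L.drop i, a ≤ b := by
    have h := hLs
    rw [show L = L.take i ++ L.drop i from (List.take_append_drop i L).symm,
      List.pairwise_append] at h
    exact h.2.2
  have hmaxle : maxPrimeFac (L.take i).prod ≤ ((L.drop i).prod).minFac := by
    rw [hminFac i hiL]
    have hget1 : 1 ≤ L.get ⟨i, hiL⟩ := (hLp _ (L.get_mem _)).pos
    rw [maxPrimeFac, max_le_iff]
    refine ⟨Finset.sup_le ?_, hget1⟩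
    intro p hp
    rw [Nat.mem_primeFactors] at hp
    obtain ⟨hpp, hpd, -⟩ := hp
    have hpl : p ∈ L.take i := by
      have : p ∈ ((L.take i).prod).primeFactorsList :=
        (Nat.mem_primeFactorsList hu0.ne').mpr ⟨hpp, hpd⟩
      rwa [sortedPrimes_factors htake_sorted htake_primes] at this
    exact hcross p hpl _ hgetmem
  have hdivi : (((L.drop i).prod : ℕ) : ℝ) / ((((L.drop i).prod).minFac : ℕ) : ℝ) ≤ V₀ := by
    rw [hminFac i hiL, hstep i hiL]
    have hgpos : (0 : ℝ) < (L.get ⟨i, hiL⟩ : ℝ) := by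
      exact_mod_cast (hLp _ (L.get_mem _)).pos
    rw [Nat.cast_mul, mul_div_cancel_left₀ _ hgpos.ne']
    exact hi1
  refine ⟨⟨(L.take i).prod, (L.drop i).prod⟩, ⟨hmul, hmaxle, hi2, hdivi⟩, ?_⟩
  -- uniqueness
  rintro ⟨u, v⟩ ⟨h1, h2, h3, h4⟩
  dsimp only at h1 h2 h3 h4
  have hv2 : 2 ≤ v := by
    have : (1 : ℝ) < (v : ℝ) := lt_of_le_of_lt hV h3
    exact_mod_cast this
  have hv0 : v ≠ 0 := by omega
  have hu0' : u ≠ 0 := by rintro rfl; simp at h1; omega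
  have hcat_sorted : (u.primeFactorsList ++ v.primeFactorsList).Pairwise (· ≤ ·) := by
    rw [List.pairwise_append]
    refine ⟨(Nat.primeFactorsList_sorted u).pairwise, (Nat.primeFactorsList_sorted v).pairwise, ?_⟩
    intro a ha b hb
    have hap : a.Prime := Nat.prime_of_mem_primeFactorsList ha
    have hbp : b.Prime := Nat.prime_of_mem_primeFactorsList hb
    have h5 : a ≤ maxPrimeFac u := by
      have : a ∈ u.primeFactors := Nat.mem_primeFactors.mpr
        ⟨hap, Nat.dvd_of_mem_primeFactorsList ha, hu0'⟩
      exact le_trans (Finset.le_sup (f := id) this) (le_max_left _ _)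
    have h6 : v.minFac ≤ b := Nat.minFac_le_of_dvd hbp.two_le
      (Nat.dvd_of_mem_primeFactorsList hb)
    omega
  have hcat_primes : ∀ p ∈ u.primeFactorsList ++ v.primeFactorsList, p.Prime := by
    intro p hp
    rcases List.mem_append.mp hp with h | h <;>
      exact Nat.prime_of_mem_primeFactorsList h
  have hcat : L = u.primeFactorsList ++ v.primeFactorsList := by
    have hprod : (u.primeFactorsList ++ v.primeFactorsList).prod = n := by
      rw [List.prod_append, Nat.prod_primeFactorsList hu0',
        Nat.prod_primeFactorsList hv0, h1]
    rw [hLdef, ← hprod, sortedPrimes_factors hcat_sorted hcat_primes]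
  set j := u.primeFactorsList.length with hjdef
  have hvd : v.primeFactorsList = L.drop j := by rw [hcat, List.drop_left]
  have hv_eq : v = (L.drop j).prod := by
    rw [← hvd, Nat.prod_primeFactorsList hv0]
  have hjL : j < L.length := by
    by_contra h
    push_neg at h
    rw [List.drop_eq_nil_of_le h] at hv_eq
    simp at hv_eq
    omega
  have hj2 : ((L.drop (j+1)).prod : ℝ) ≤ V₀ := by
    have hm : v.minFac = L.get ⟨j, hjL⟩ := by
      rw [hv_eq]; exact hminFac j hjL
    have hgpos : (0 : ℝ) < (L.get ⟨j, hjL⟩ : ℝ) := by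
      exact_mod_cast (hLp _ (L.get_mem _)).pos
    rw [hm, hv_eq, hstep j hjL, Nat.cast_mul,
      mul_div_cancel_left₀ _ hgpos.ne'] at h4
    exact h4
  have hj3 : V₀ < ((L.drop j).prod : ℝ) := hv_eq ▸ h3
  -- i = j
  have hij : i = j := by
    rcases lt_trichotomy i j with h | h | h
    · exfalso
      have : (L.drop j).prod ≤ (L.drop (i+1)).prod :=
        drop_prod_anti hLp (by omega)
      have hc : ((L.drop j).prod : ℝ) ≤ ((L.drop (i+1)).prod : ℝ) := by
        exact_mod_cast this
      linarith
    · exact h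
    · exfalso
      have : (L.drop i).prod ≤ (L.drop (j+1)).prod :=
        drop_prod_anti hLp (by omega)
      have hc : ((L.drop i).prod : ℝ) ≤ ((L.drop (j+1)).prod : ℝ) := by
        exact_mod_cast this
      linarith
  have hveq : v = (L.drop i).prod := by rw [hij]; exact hv_eq
  have hueq : u = (L.take i).prod := by
    have : u * v = (L.take i).prod * (L.drop i).prod := by rw [← h1, ← hmul]
    rw [hveq] at this
    exact Nat.eq_of_mul_eq_mul_right (hdrop_pos i) this
  simp [hueq, hveq]
end

section
/- Let f be a completely multiplicative function, let χ be a Dirichlet character mod q induced by the primitive character ψ mod r, and let g be the Dirichlet inverse of f. Let h be the multiplicative function supported only on integers all of whose prime factors divide q but not r, defined by h(p^k) = g(p^k) ψ̄(p^k) on such prime powers. Then f·χ̄ = h * (f·ψ̄), and consequently for every x ≥ 1, |Σ_{n≤x} f(n)χ̄(n)| ≤ Σ_{m ≥ 1, rad(m) | q, gcd(rad(m), r) = 1} |Σ_{n ≤ x/m} f(n)ψ̄(n)|, where each |h(m)| ≤ 1 provided |g(n)| ≤ 1 for all n. -/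
open ComplexConjugate

/-- The radical (squarefree kernel) of `m`. -/
def rad (m : ℕ) : ℕ := m.primeFactors.prod id

private def toAF (F : ℕ → ℂ) : ArithmeticFunction ℂ :=
  ⟨fun n => if n = 0 then 0 else F n, if_pos rfl⟩

private lemma toAF_apply (F : ℕ → ℂ) {n : ℕ} (hn : n ≠ 0) : toAF F n = F n := if_neg hn

private lemma swap_sum (N : ℕ) (t : ℕ → ℕ → ℂ) :
    ∑ n ∈ Finset.Icc 1 N, ∑ p ∈ n.divisorsAntidiagonal, t p.1 p.2
      = ∑ d ∈ Finset.Icc 1 N, ∑ e ∈ Finset.Icc 1 (N / d), t d e := by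
  rw [Finset.sum_sigma', Finset.sum_sigma']
  refine Finset.sum_nbij' (fun p => ⟨p.2.1, p.2.2⟩) (fun p => ⟨p.1 * p.2, (p.1, p.2)⟩)
    ?_ ?_ ?_ ?_ ?_
  · rintro ⟨n, d, e⟩ hmem
    simp only [Finset.mem_sigma, Finset.mem_Icc, Nat.mem_divisorsAntidiagonal] at hmem ⊢
    obtain ⟨⟨hn1, hnN⟩, hde, hn0⟩ := hmem
    have hd0 : 0 < d := Nat.pos_of_ne_zero (by rintro rfl; simp at hde; omega)
    have he0 : 0 < e := Nat.pos_of_ne_zero (by rintro rfl; simp at hde; omega)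
    refine ⟨⟨hd0, ?_⟩, he0, ?_⟩
    · calc d ≤ d * e := Nat.le_mul_of_pos_right d he0
      _ = n := hde
      _ ≤ N := hnN
    · rw [Nat.le_div_iff_mul_le hd0, mul_comm]
      omega
  · rintro ⟨d, e⟩ hmem
    simp only [Finset.mem_sigma, Finset.mem_Icc, Nat.mem_divisorsAntidiagonal] at hmem
    obtain ⟨⟨hd1, hdN⟩, he1, heNd⟩ := hmem
    rw [Nat.le_div_iff_mul_le (by omega)] at heNd
    have h1 : 0 < d * e := Nat.mul_pos hd1 he1
    have h2 : d * e ≤ N := by rw [mul_comm]; exact heNd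
    exact Finset.mem_sigma.mpr ⟨Finset.mem_Icc.mpr ⟨h1, h2⟩,
      Nat.mem_divisorsAntidiagonal.mpr ⟨rfl, h1.ne'⟩⟩
  · rintro ⟨n, d, e⟩ hmem
    simp only [Finset.mem_sigma, Nat.mem_divisorsAntidiagonal] at hmem
    obtain ⟨-, hde, -⟩ := hmem
    simp [hde]
  · rintro ⟨d, e⟩ _
    rfl
  · rintro ⟨n, d, e⟩ _
    rfl

/-- Let `f` be completely multiplicative with Dirichlet inverse `g` satisfying
`|g(n)| ≤ 1`, let `χ` mod `q` be induced by the primitive character `ψ` mod `r`, and let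
`h` be the multiplicative function supported on integers all of whose prime factors
divide `q` but not `r`, with `h(p^k) = g(p^k) ψ̄(p^k)` there. Then
`f·χ̄ = h * (f·ψ̄)` (Dirichlet convolution), each `|h(m)| ≤ 1`, and
`|Σ_{n≤x} f(n)χ̄(n)| ≤ Σ_{m, rad(m) ∣ q, (rad(m),r)=1} |Σ_{n≤x/m} f(n)ψ̄(n)|`. -/
theorem stmt_8 (q r : ℕ) (hrq : r ∣ q)
    (χ : DirichletCharacter ℂ q) (ψ : DirichletCharacter ℂ r) (hψ : ψ.IsPrimitive)
    (hind : ∀ n : ℕ, Nat.Coprime n q → χ (n : ZMod q) = ψ (n : ZMod r))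
    (f g h : ℕ → ℂ)
    (hf1 : f 1 = 1) (hfm : ∀ m n : ℕ, f (m * n) = f m * f n)
    (hg : ∀ n : ℕ, 1 ≤ n →
      (∑ d ∈ n.divisors, f d * g (n / d)) = if n = 1 then 1 else 0)
    (hgb : ∀ n : ℕ, ‖g n‖ ≤ 1)
    (hh1 : h 1 = 1)
    (hhm : ∀ m n : ℕ, Nat.Coprime m n → h (m * n) = h m * h n)
    (hsupp : ∀ p k : ℕ, p.Prime → 1 ≤ k → ¬(p ∣ q ∧ ¬ p ∣ r) → h (p ^ k) = 0)
    (hval : ∀ p k : ℕ, p.Prime → p ∣ q → ¬ p ∣ r →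
      h (p ^ k) = g (p ^ k) * conj (ψ ((p ^ k : ℕ) : ZMod r)))
    (x : ℝ) (hx : 1 ≤ x) :
    (∀ n : ℕ, 1 ≤ n → f n * conj (χ (n : ZMod q)) =
      ∑ d ∈ n.divisors, h d * (f (n / d) * conj (ψ ((n / d : ℕ) : ZMod r)))) ∧
    (∀ m : ℕ, 1 ≤ m → ‖h m‖ ≤ 1) ∧
    ‖∑ n ∈ Finset.Icc 1 ⌊x⌋₊, f n * conj (χ (n : ZMod q))‖ ≤
      ∑ m ∈ (Finset.Icc 1 ⌊x⌋₊).filter (fun m => rad m ∣ q ∧ Nat.Coprime (rad m) r),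
        ‖∑ n ∈ Finset.Icc 1 ⌊x / m⌋₊, f n * conj (ψ (n : ZMod r))‖ := by
  classical
  -- vanishing of a Dirichlet character at powers of a prime dividing the modulus
  have hvanish : ∀ (M : ℕ) (χ' : DirichletCharacter ℂ M) (p i : ℕ), p.Prime → p ∣ M →
      1 ≤ i → χ' ((p ^ i : ℕ) : ZMod M) = 0 := by
    intro M χ' p i hp hpM hi
    apply χ'.map_nonunit
    intro hu
    have h2 := hu.map (ZMod.castHom hpM (ZMod p))
    rw [map_natCast] at h2
    haveI : Fact p.Prime := ⟨hp⟩
    have : ((p ^ i : ℕ) : ZMod p) = 0 := by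
      push_cast
      rw [ZMod.natCast_self, zero_pow (by omega)]
    rw [this] at h2
    exact not_isUnit_zero h2
  -- the arithmetic functions
  set H : ArithmeticFunction ℂ := toAF h with hH_def
  set F : ArithmeticFunction ℂ := toAF (fun n => f n * conj (ψ (n : ZMod r))) with hF_def
  set G : ArithmeticFunction ℂ := toAF (fun n => f n * conj (χ (n : ZMod q))) with hG_def
  have hH1 : H 1 = h 1 := toAF_apply _ one_ne_zero
  have hHap : ∀ {n : ℕ}, n ≠ 0 → H n = h n := fun hn => toAF_apply _ hn
  have hFap : ∀ {n : ℕ}, n ≠ 0 → F n = f n * conj (ψ (n : ZMod r)) := fun hn => toAF_apply _ hn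
  have hGap : ∀ {n : ℕ}, n ≠ 0 → G n = f n * conj (χ (n : ZMod q)) := fun hn => toAF_apply _ hn
  have hHmul : H.IsMultiplicative := by
    rw [ArithmeticFunction.IsMultiplicative.iff_ne_zero]
    constructor
    · rw [hH1, hh1]
    · intro m n hm hn hmn
      rw [hHap (mul_ne_zero hm hn), hHap hm, hHap hn, hhm m n hmn]
  have hFmul : F.IsMultiplicative := by
    rw [ArithmeticFunction.IsMultiplicative.iff_ne_zero]
    constructor
    · rw [hFap one_ne_zero, hf1, Nat.cast_one, map_one, map_one, one_mul]
    · intro m n hm hn _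
      rw [hFap (mul_ne_zero hm hn), hFap hm, hFap hn, hfm, Nat.cast_mul, map_mul, map_mul]
      ring
  have hGmul : G.IsMultiplicative := by
    rw [ArithmeticFunction.IsMultiplicative.iff_ne_zero]
    constructor
    · rw [hGap one_ne_zero, hf1, Nat.cast_one, map_one, map_one, one_mul]
    · intro m n hm hn _
      rw [hGap (mul_ne_zero hm hn), hGap hm, hGap hn, hfm, Nat.cast_mul, map_mul, map_mul]
      ring
  -- the key identity on prime powers
  have key : G = H * F := by
    rw [ArithmeticFunction.IsMultiplicative.eq_iff_eq_on_prime_powers G hGmul _ (hHmul.mul hFmul)]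
    intro p i hp
    have hp0 : (0:ℕ) < p := hp.pos
    have hpi0 : p ^ i ≠ 0 := pow_ne_zero _ (by omega)
    rcases Nat.eq_zero_or_pos i with rfl | hi
    · rw [pow_zero, hGmul.map_one, (hHmul.mul hFmul).map_one]
    by_cases hpq : p ∣ q
    · -- χ(p^i) = 0
      have hchi0 : χ ((p ^ i : ℕ) : ZMod q) = 0 := hvanish q χ p i hp hpq hi
      rw [hGap hpi0, hchi0, map_zero, mul_zero]
      by_cases hpr : p ∣ r
      · -- every term vanishes
        rw [ArithmeticFunction.mul_apply]
        refine (Finset.sum_eq_zero ?_).symm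
        rintro ⟨d, e⟩ hmem
        rw [Nat.mem_divisorsAntidiagonal] at hmem
        obtain ⟨hde, -⟩ := hmem
        have hd : d ∣ p ^ i := ⟨e, hde.symm⟩
        have he : e ∣ p ^ i := ⟨d, by rw [← hde]; ring⟩
        obtain ⟨a, ha, rfl⟩ := (Nat.dvd_prime_pow hp).mp hd
        obtain ⟨b, hb, rfl⟩ := (Nat.dvd_prime_pow hp).mp he
        have hab : a + b = i := by
          have := hde
          rw [← pow_add] at this
          exact Nat.pow_right_injective hp.two_le this
        rcases Nat.eq_zero_or_pos b with rfl | hb1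
        · -- b = 0 so a = i ≥ 1, H (p^a) = 0
          have : H (p ^ a) = 0 := by
            rw [hHap (pow_ne_zero _ (by omega))]
            exact hsupp p a hp (by omega) (by tauto)
          rw [this, zero_mul]
        · -- ψ(p^b) = 0
          have : F (p ^ b) = 0 := by
            rw [hFap (pow_ne_zero _ (by omega)), hvanish r ψ p b hp hpr hb1, map_zero, mul_zero]
          rw [this, mul_zero]
      · -- p ∣ q, p ∤ r : sum telescopes to (f*g)(p^i) ψ̄(p^i) = 0
        rw [ArithmeticFunction.mul_apply,
          Nat.sum_divisorsAntidiagonal' (f := fun a b => H a * F b)]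
        have hne : p ^ i ≠ 1 := (Nat.one_lt_pow (by omega) hp.one_lt).ne'
        have hstep : ∀ d ∈ (p ^ i).divisors,
            H (p ^ i / d) * F d
              = conj (ψ ((p ^ i : ℕ) : ZMod r)) * (f d * g (p ^ i / d)) := by
          intro d hd
          obtain ⟨hdvd, -⟩ := Nat.mem_divisors.mp hd
          have hd0 : d ≠ 0 := by
            rintro rfl
            exact hpi0 (Nat.eq_zero_of_zero_dvd hdvd)
          have hqd : p ^ i / d ∣ p ^ i := Nat.div_dvd_of_dvd hdvd
          have hmulback : (p ^ i / d) * d = p ^ i := Nat.div_mul_cancel hdvd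
          have hqd0 : p ^ i / d ≠ 0 := by
            intro hz
            rw [hz, zero_mul] at hmulback
            exact hpi0 hmulback.symm
          obtain ⟨k, hk, hdk⟩ := (Nat.dvd_prime_pow hp).mp hqd
          rw [hHap hqd0, hFap hd0, hdk, hval p k hp hpq hpr, ← hdk]
          have hpsi : conj (ψ ((p ^ i / d : ℕ) : ZMod r)) * conj (ψ ((d : ℕ) : ZMod r))
              = conj (ψ ((p ^ i : ℕ) : ZMod r)) := by
            rw [← map_mul, ← map_mul, ← Nat.cast_mul, hmulback]
          calc g (p ^ i / d) * conj (ψ ((p ^ i / d : ℕ) : ZMod r))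
                * (f d * conj (ψ ((d : ℕ) : ZMod r)))
              = (conj (ψ ((p ^ i / d : ℕ) : ZMod r)) * conj (ψ ((d : ℕ) : ZMod r)))
                * (f d * g (p ^ i / d)) := by ring
            _ = conj (ψ ((p ^ i : ℕ) : ZMod r)) * (f d * g (p ^ i / d)) := by rw [hpsi]
        rw [Finset.sum_congr rfl hstep, ← Finset.mul_sum,
          hg (p ^ i) (Nat.one_le_iff_ne_zero.mpr hpi0), if_neg hne, mul_zero]
    · -- p ∤ q : only d = 1 survives
      have hcop : Nat.Coprime (p ^ i) q :=
        Nat.Coprime.pow_left _ ((Nat.Prime.coprime_iff_not_dvd hp).mpr hpq)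
      rw [ArithmeticFunction.mul_apply,
        Nat.sum_divisorsAntidiagonal (f := fun a b => H a * F b)]
      have h1mem : (1:ℕ) ∈ (p ^ i).divisors := Nat.one_mem_divisors.mpr hpi0
      rw [Finset.sum_eq_single_of_mem 1 h1mem ?side]
      · rw [hHap one_ne_zero, hh1, Nat.div_one, one_mul, hGap hpi0, hFap hpi0,
          hind _ hcop]
      case side =>
        intro d hd hd1
        obtain ⟨hdvd, -⟩ := Nat.mem_divisors.mp hd
        obtain ⟨k, hk, rfl⟩ := (Nat.dvd_prime_pow hp).mp hdvd
        have hk1 : 1 ≤ k := by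
          rcases Nat.eq_zero_or_pos k with rfl | hk1
          · simp at hd1
          · exact hk1
        have : H (p ^ k) = 0 := by
          rw [hHap (pow_ne_zero _ (by omega))]
          exact hsupp p k hp hk1 (by tauto)
        rw [this, zero_mul]
  -- Part 1
  have part1 : ∀ n : ℕ, 1 ≤ n → f n * conj (χ (n : ZMod q)) =
      ∑ d ∈ n.divisors, h d * (f (n / d) * conj (ψ ((n / d : ℕ) : ZMod r))) := by
    intro n hn
    have hn0 : n ≠ 0 := by omega
    have := congrArg (fun (φ : ArithmeticFunction ℂ) => φ n) key
    rw [hGap hn0] at this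
    rw [this, ArithmeticFunction.mul_apply,
      Nat.sum_divisorsAntidiagonal (f := fun a b => H a * F b)]
    refine Finset.sum_congr rfl ?_
    intro d hd
    obtain ⟨hdvd, -⟩ := Nat.mem_divisors.mp hd
    have hd0 : d ≠ 0 := by rintro rfl; exact hn0 (Nat.eq_zero_of_zero_dvd hdvd)
    have hnd0 : n / d ≠ 0 := by
      have := Nat.div_pos (Nat.le_of_dvd (by omega) hdvd) (Nat.pos_of_ne_zero hd0)
      omega
    rw [hHap hd0, hFap hnd0]
  -- Part 2
  have part2 : ∀ m : ℕ, 1 ≤ m → ‖h m‖ ≤ 1 := by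
    intro m hm
    have hm0 : m ≠ 0 := by omega
    rw [Nat.multiplicative_factorization h hhm hh1 hm0, Finsupp.prod]
    rw [norm_prod]
    refine Finset.prod_le_one (fun _ _ => norm_nonneg _) ?_
    intro p hp
    have hpp : p.Prime := Nat.prime_of_mem_primeFactors (by
      rwa [← Nat.support_factorization])
    have hk1 : 1 ≤ m.factorization p := by
      have := Finsupp.mem_support_iff.mp hp
      omega
    by_cases hc : p ∣ q ∧ ¬ p ∣ r
    · rw [hval p _ hpp hc.1 hc.2, norm_mul, RCLike.norm_conj]
      calc ‖g (p ^ m.factorization p)‖ * ‖ψ (((p ^ m.factorization p : ℕ)) : ZMod r)‖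
          ≤ 1 * 1 := by
            exact mul_le_mul (hgb _) (ψ.norm_le_one _) (norm_nonneg _) zero_le_one
        _ = 1 := one_mul 1
    · rw [hsupp p _ hpp hk1 hc, norm_zero]
      exact zero_le_one
  refine ⟨part1, part2, ?_⟩
  -- Part 3
  set N := ⌊x⌋₊ with hN
  -- nonvanishing of h forces the support condition
  have hsupp' : ∀ d : ℕ, d ≠ 0 → h d ≠ 0 → rad d ∣ q ∧ Nat.Coprime (rad d) r := by
    intro d hd0 hhd
    have hall : ∀ p ∈ d.primeFactors, p ∣ q ∧ ¬ p ∣ r := by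
      intro p hp
      by_contra hc
      apply hhd
      rw [Nat.multiplicative_factorization h hhm hh1 hd0, Finsupp.prod]
      refine Finset.prod_eq_zero (i := p) (by rwa [Nat.support_factorization]) ?_
      have hpp : p.Prime := Nat.prime_of_mem_primeFactors hp
      have hk1 : 1 ≤ d.factorization p := by
        have : p ∈ (d.factorization).support := by rwa [Nat.support_factorization]
        have := Finsupp.mem_support_iff.mp this
        omega
      exact hsupp p _ hpp hk1 hc
    constructor
    · refine Finset.prod_primes_dvd q ?_ ?_
      · intro p hp
        exact (Nat.prime_of_mem_primeFactors hp).prime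
      · intro p hp
        exact (hall p hp).1
    · rw [rad, Nat.coprime_prod_left_iff]
      intro p hp
      exact (Nat.Prime.coprime_iff_not_dvd (Nat.prime_of_mem_primeFactors hp)).mpr (hall p hp).2
  -- rewrite the sum using the convolution and swap
  have hsum : ∑ n ∈ Finset.Icc 1 N, f n * conj (χ (n : ZMod q))
      = ∑ d ∈ Finset.Icc 1 N, h d *
          ∑ e ∈ Finset.Icc 1 (N / d), f e * conj (ψ (e : ZMod r)) := by
    have step1 : ∑ n ∈ Finset.Icc 1 N, f n * conj (χ (n : ZMod q))
        = ∑ n ∈ Finset.Icc 1 N, ∑ p ∈ n.divisorsAntidiagonal,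
            h p.1 * (f p.2 * conj (ψ (p.2 : ZMod r))) := by
      refine Finset.sum_congr rfl ?_
      intro n hn
      rw [Finset.mem_Icc] at hn
      rw [part1 n hn.1, ← Nat.sum_divisorsAntidiagonal
        (f := fun a b => h a * (f b * conj (ψ ((b : ℕ) : ZMod r))))]
    rw [step1, swap_sum N (fun a b => h a * (f b * conj (ψ (b : ZMod r))))]
    refine Finset.sum_congr rfl ?_
    intro d _
    rw [Finset.mul_sum]
  rw [hsum]
  -- restrict to the support of h
  set P : ℕ → Prop := fun m => rad m ∣ q ∧ Nat.Coprime (rad m) r with hP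
  have hrestrict : ∑ d ∈ (Finset.Icc 1 N).filter P,
        (h d * ∑ e ∈ Finset.Icc 1 (N / d), f e * conj (ψ (e : ZMod r)))
      = ∑ d ∈ Finset.Icc 1 N,
        (h d * ∑ e ∈ Finset.Icc 1 (N / d), f e * conj (ψ (e : ZMod r))) := by
    refine Finset.sum_filter_of_ne ?_
    intro d hd hne
    have hd0 : d ≠ 0 := by
      rw [Finset.mem_Icc] at hd
      omega
    have hhd : h d ≠ 0 := fun hz => hne (by rw [hz, zero_mul])
    exact hsupp' d hd0 hhd
  rw [← hrestrict]
  refine le_trans (norm_sum_le _ _) ?_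
  refine Finset.sum_le_sum ?_
  intro d hd
  rw [Finset.mem_filter, Finset.mem_Icc] at hd
  have hfloor : ⌊x / (d : ℝ)⌋₊ = N / d := Nat.floor_div_natCast x d
  rw [hfloor, norm_mul]
  calc ‖h d‖ * ‖∑ e ∈ Finset.Icc 1 (N / d), f e * conj (ψ (e : ZMod r))‖
      ≤ 1 * ‖∑ e ∈ Finset.Icc 1 (N / d), f e * conj (ψ (e : ZMod r))‖ := by
        exact mul_le_mul_of_nonneg_right (part2 d hd.1.1) (norm_nonneg _)
    _ = _ := one_mul _
end
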